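/- If (X,T) is expansive with constant δ, has non-uniform transitivity with gap bounds f(n) at scale δ/3, φ is a potential with partial sum variation bounds g(n), and C > 0, M ≥ 3 satisfy f(n)+g(n) ≤ min(C·ln n, n) for all n ≥ M, then for all n ≥ M: Z(X,T,φ,n,δ) ≤ D · e^{n·P(X,T,φ)} · n^{CE}, where D, E are constants depending only on X and φ. -/

import Mathlib

open Filter Topology MeasureTheory

/-- Non-uniform transitivity with gap bounds `f` at scale `η`. -/
def NonUnifTrans {X : Type*} [MetricSpace X] (T : X → X) (f : ℕ → ℕ) (η : ℝ) : Prop :=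
  ∀ (n : ℕ) (x y : X), ∃ i ≤ f n, ∃ z : X,
    (∀ l < n, dist (T^[l] z) (T^[l] x) < η) ∧
    (∀ l < n, dist (T^[n + i + l] z) (T^[l] y) < η)

/-- Expansivity with constant `δ`: some `ℤ`-iterate separates any two distinct points by more than `δ`. -/
def Expansive {X : Type*} [MetricSpace X] [CompactSpace X] (T : X ≃ₜ X) (δ : ℝ) : Prop :=
  ∀ x y : X, x ≠ y → ∃ n : ℤ,
    δ < dist (((T.toEquiv : Equiv.Perm X) ^ n) x) (((T.toEquiv : Equiv.Perm X) ^ n) y)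

/-- Birkhoff partial sums `S_n φ`. -/
def birkhoff {X : Type*} (T : X → X) (φ : X → ℝ) (n : ℕ) (x : X) : ℝ :=
  ∑ i ∈ Finset.range n, φ (T^[i] x)

/-- `g` is a bound for the partial sum variations of `φ` at scale `η`:
`g n ≥ V(X,T,φ,i,η)` whenever `i ≤ n`. -/
def HasVarBounds {X : Type*} [MetricSpace X] (T : X → X) (φ : X → ℝ) (g : ℕ → ℝ) (η : ℝ) : Prop :=
  ∀ n, ∀ i ≤ n, ∀ x y : X, (∀ j < i, dist (T^[j] x) (T^[j] y) < η) →
    |birkhoff T φ i x - birkhoff T φ i y| ≤ g n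

/-- `S` is `(n, ε)`-separated. -/
def IsSep {X : Type*} [MetricSpace X] (T : X → X) (n : ℕ) (ε : ℝ) (S : Set X) : Prop :=
  ∀ x ∈ S, ∀ y ∈ S, x ≠ y → ∃ k < n, ε < dist (T^[k] x) (T^[k] y)

/-- The partition function `Z(X,T,φ,n,ε)`: the maximal value of `∑_{x ∈ S} e^{S_n φ(x)}`
over `(n,ε)`-separated sets `S`. -/
noncomputable def partFn {X : Type*} [MetricSpace X] (T : X → X) (φ : X → ℝ) (n : ℕ) (ε : ℝ) : ℝ :=
  sSup {r | ∃ S : Finset X, IsSep T n ε ↑S ∧ r = ∑ x ∈ S, Real.exp (birkhoff T φ n x)}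

section Aux
variable {X : Type*} [MetricSpace X] [CompactSpace X] [Nonempty X]

lemma sep_sum_bdd (T : X → X) (hT : Continuous T) (φ : X → ℝ) (K : ℝ) (hK : ∀ x, |φ x| ≤ K)
    (n : ℕ) (ε : ℝ) (hε : 0 < ε) :
    ∃ R : ℝ, ∀ S : Finset X, IsSep T n ε ↑S → ∑ x ∈ S, Real.exp (birkhoff T φ n x) ≤ R := by
  classical
  set Φ : X → (Fin n → X) := fun x k => T^[(k : ℕ)] x with hΦdef
  have hΦ : Continuous Φ := continuous_pi fun k => hT.iterate _
  have hcomp : IsCompact (Set.range Φ) := isCompact_range hΦ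
  obtain ⟨t, htfin, htcov⟩ := (Metric.totallyBounded_iff.mp hcomp.totallyBounded) (ε/2) (by linarith)
  refine ⟨(htfin.toFinset.card : ℝ) * Real.exp (n * K), fun S hS => ?_⟩
  have hchoice : ∀ x : X, ∃ y ∈ t, Φ x ∈ Metric.ball y (ε/2) := by
    intro x
    have := htcov (Set.mem_range_self x)
    simpa using this
  choose c hc1 hc2 using hchoice
  have hcard : S.card ≤ htfin.toFinset.card := by
    refine Finset.card_le_card_of_injOn c (fun a _ => htfin.mem_toFinset.mpr (hc1 a)) ?_
    intro a ha b hb hab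
    by_contra hne
    obtain ⟨k, hk, hsep⟩ := hS a ha b hb hne
    have h1 : dist (Φ a) (Φ b) < ε := by
      have := Metric.mem_ball.mp (hc2 a)
      have h2 := Metric.mem_ball.mp (hc2 b)
      calc dist (Φ a) (Φ b) ≤ dist (Φ a) (c a) + dist (Φ b) (c b) := by
            rw [hab]; exact dist_triangle_right _ _ _
        _ < ε/2 + ε/2 := by exact add_lt_add this h2
        _ = ε := by ring
    have := dist_le_pi_dist (Φ a) (Φ b) ⟨k, hk⟩
    simp only [hΦdef] at this
    exact absurd (lt_of_lt_of_le hsep (this.trans h1.le)) (lt_irrefl _)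
  have hterm : ∀ x ∈ S, Real.exp (birkhoff T φ n x) ≤ Real.exp (n * K) := by
    intro x _
    apply Real.exp_le_exp.mpr
    calc birkhoff T φ n x ≤ ∑ i ∈ Finset.range n, K :=
          Finset.sum_le_sum fun i _ => (abs_le.mp (hK _)).2
      _ = n * K := by simp [mul_comm]
  calc ∑ x ∈ S, Real.exp (birkhoff T φ n x) ≤ ∑ _x ∈ S, Real.exp (n * K) :=
        Finset.sum_le_sum hterm
    _ = S.card * Real.exp (n * K) := by simp
    _ ≤ (htfin.toFinset.card : ℝ) * Real.exp (n * K) := by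
        apply mul_le_mul_of_nonneg_right _ (Real.exp_nonneg _)
        exact_mod_cast hcard

lemma partFn_bddAbove (T : X → X) (hT : Continuous T) (φ : X → ℝ) (K : ℝ) (hK : ∀ x, |φ x| ≤ K)
    (n : ℕ) (ε : ℝ) (hε : 0 < ε) :
    BddAbove {r | ∃ S : Finset X, IsSep T n ε ↑S ∧ r = ∑ x ∈ S, Real.exp (birkhoff T φ n x)} := by
  obtain ⟨R, hR⟩ := sep_sum_bdd T hT φ K hK n ε hε
  exact ⟨R, fun r ⟨S, hS, hr⟩ => hr ▸ hR S hS⟩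

lemma le_partFn (T : X → X) (hT : Continuous T) (φ : X → ℝ) (K : ℝ) (hK : ∀ x, |φ x| ≤ K)
    (n : ℕ) (ε : ℝ) (hε : 0 < ε) (S : Finset X) (hS : IsSep T n ε ↑S) :
    ∑ x ∈ S, Real.exp (birkhoff T φ n x) ≤ partFn T φ n ε :=
  le_csSup (partFn_bddAbove T hT φ K hK n ε hε) ⟨S, hS, rfl⟩

lemma isSep_singleton (T : X → X) (n : ℕ) (ε : ℝ) (x₀ : X) : IsSep T n ε ↑({x₀} : Finset X) := by
  intro x hx y hy hxy
  simp only [Finset.coe_singleton, Set.mem_singleton_iff] at hx hy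
  exact absurd (hx.trans hy.symm) hxy

lemma partFn_pos (T : X → X) (hT : Continuous T) (φ : X → ℝ) (K : ℝ) (hK : ∀ x, |φ x| ≤ K)
    (n : ℕ) (ε : ℝ) (hε : 0 < ε) : 0 < partFn T φ n ε := by
  obtain ⟨x₀⟩ := (inferInstance : Nonempty X)
  have h := le_partFn T hT φ K hK n ε hε {x₀} (isSep_singleton T n ε x₀)
  simp only [Finset.sum_singleton] at h
  exact lt_of_lt_of_le (Real.exp_pos _) h

lemma shift_sum_le (T : X ≃ₜ X) (φ : X → ℝ) (K : ℝ) (hK : ∀ x, |φ x| ≤ K)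
    (δ : ℝ) (hδ : 0 < δ) (N : ℕ)
    (hN : ∀ x y : X, δ/3 < dist x y →
      ∃ k ≤ 2*N, δ < dist ((⇑T)^[k] ((⇑T.symm)^[N] x)) ((⇑T)^[k] ((⇑T.symm)^[N] y)))
    (m : ℕ) (S : Finset X) (hS : IsSep (⇑T) m (δ/3) ↑S) :
    ∑ z ∈ S, Real.exp (birkhoff (⇑T) φ m z)
      ≤ Real.exp (2*N*K) * partFn (⇑T) φ (m + 2*N) δ := by
  classical
  set σ : X → X := (⇑T.symm)^[N] with hσ
  have hσinj : Function.Injective σ := T.symm.injective.iterate N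
  have hc : Function.Commute (⇑T) (⇑T.symm) := by intro w; simp
  have hcomm : ∀ (a b : ℕ) (w : X), σ ((⇑T)^[b] w) = (⇑T)^[b] (σ w) := by
    intro a b w
    exact ((hc.iterate_iterate b N) w).symm
  have hinv : ∀ w : X, (⇑T)^[N] (σ w) = w :=
    (Function.LeftInverse.iterate (fun x => T.apply_symm_apply x) N)
  set S' : Finset X := S.image σ with hS'
  have hsep' : IsSep (⇑T) (m + 2*N) δ ↑S' := by
    intro u hu u' hu' huu'
    simp only [hS', Finset.coe_image, Set.mem_image, Finset.mem_coe] at hu hu'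
    obtain ⟨z, hz, rfl⟩ := hu
    obtain ⟨z', hz', rfl⟩ := hu'
    have hzz' : z ≠ z' := fun h => huu' (by rw [h])
    obtain ⟨k₀, hk₀, hsep⟩ := hS z hz z' hz' hzz'
    obtain ⟨k, hk, hd⟩ := hN _ _ hsep
    refine ⟨k + k₀, by omega, ?_⟩
    have heq : ∀ w : X, (⇑T)^[k] ((⇑T.symm)^[N] ((⇑T)^[k₀] w)) = (⇑T)^[k + k₀] (σ w) := by
      intro w
      rw [← hσ, hcomm N k₀ w, Function.iterate_add_apply]
    rw [heq, heq] at hd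
    exact hd
  have hbirk : ∀ z : X, birkhoff (⇑T) φ m z ≤ birkhoff (⇑T) φ (m + 2*N) (σ z) + 2*N*K := by
    intro z
    have hexpand : birkhoff (⇑T) φ (m + 2*N) (σ z)
        = (∑ l ∈ Finset.range N, φ ((⇑T)^[l] (σ z))) + (birkhoff (⇑T) φ m z
          + ∑ l ∈ Finset.range N, φ ((⇑T)^[m + l] z)) := by
      have h1 : m + 2*N = N + (m + N) := by ring
      rw [birkhoff, h1, Finset.sum_range_add]
      congr 1
      have h2 : ∀ l, (⇑T)^[N + l] (σ z) = (⇑T)^[l] z := by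
        intro l
        rw [add_comm, Function.iterate_add_apply, hinv]
      have h3 : ∑ l ∈ Finset.range (m + N), φ ((⇑T)^[N + l] (σ z))
          = ∑ l ∈ Finset.range (m + N), φ ((⇑T)^[l] z) := by
        exact Finset.sum_congr rfl fun l _ => by rw [h2]
      rw [h3, Finset.sum_range_add, birkhoff]
    have hb1 : -(N*K) ≤ ∑ l ∈ Finset.range N, φ ((⇑T)^[l] (σ z)) := by
      have : ∀ l ∈ Finset.range N, -K ≤ φ ((⇑T)^[l] (σ z)) :=
        fun l _ => neg_le_of_abs_le (hK _)
      calc -(N*K) = ∑ _l ∈ Finset.range N, (-K) := by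
            rw [Finset.sum_const, Finset.card_range, nsmul_eq_mul]; ring
        _ ≤ _ := Finset.sum_le_sum this
    have hb2 : -(N*K) ≤ ∑ l ∈ Finset.range N, φ ((⇑T)^[m + l] z) := by
      have : ∀ l ∈ Finset.range N, -K ≤ φ ((⇑T)^[m + l] z) :=
        fun l _ => neg_le_of_abs_le (hK _)
      calc -(N*K) = ∑ _l ∈ Finset.range N, (-K) := by
            rw [Finset.sum_const, Finset.card_range, nsmul_eq_mul]; ring
        _ ≤ _ := Finset.sum_le_sum this
    nlinarith [hexpand]
  have hKnn : 0 ≤ K := le_trans (abs_nonneg _) (hK (Classical.arbitrary X))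
  calc ∑ z ∈ S, Real.exp (birkhoff (⇑T) φ m z)
      ≤ ∑ z ∈ S, Real.exp (2*N*K) * Real.exp (birkhoff (⇑T) φ (m + 2*N) (σ z)) := by
        refine Finset.sum_le_sum fun z _ => ?_
        rw [← Real.exp_add]
        exact Real.exp_le_exp.mpr (by linarith [hbirk z])
    _ = Real.exp (2*N*K) * ∑ u ∈ S', Real.exp (birkhoff (⇑T) φ (m + 2*N) u) := by
        rw [Finset.mul_sum, hS', Finset.sum_image (fun a _ b _ h => hσinj h)]
    _ ≤ Real.exp (2*N*K) * partFn (⇑T) φ (m + 2*N) δ := by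
        apply mul_le_mul_of_nonneg_left _ (Real.exp_nonneg _)
        exact le_partFn (⇑T) T.continuous φ K hK (m + 2*N) δ hδ S' hsep'

lemma glue_sum (T : X ≃ₜ X) (φ : X → ℝ) (K : ℝ) (hK : ∀ x, |φ x| ≤ K)
    (δ : ℝ) (hδ : 0 < δ) (f : ℕ → ℕ) (htrans : NonUnifTrans (⇑T) f (δ/3))
    (g : ℕ → ℝ) (hg : HasVarBounds (⇑T) φ g (δ/3))
    (n : ℕ) (S : Finset X) (hS : IsSep (⇑T) n δ ↑S) :
    (∑ x ∈ S, Real.exp (birkhoff (⇑T) φ n x))^2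
      ≤ ∑ i ∈ Finset.range (f n + 1),
          Real.exp (2 * g n + i * K) * partFn (⇑T) φ (2*n+i) (δ/3) := by
  classical
  have hKnn : 0 ≤ K := le_trans (abs_nonneg _) (hK (Classical.arbitrary X))
  choose I hIle Z hZ1 hZ2 using htrans n
  -- pointwise estimate
  have hpt : ∀ x y : X, birkhoff (⇑T) φ n x + birkhoff (⇑T) φ n y
      ≤ birkhoff (⇑T) φ (2*n + I x y) (Z x y) + (2 * g n + (I x y) * K) := by
    intro x y
    set i := I x y with hi
    set z := Z x y with hz
    have hdecomp : birkhoff (⇑T) φ (2*n + i) z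
        = birkhoff (⇑T) φ n z + ((∑ l ∈ Finset.range i, φ ((⇑T)^[n + l] z))
          + ∑ l ∈ Finset.range n, φ ((⇑T)^[n + (i + l)] z)) := by
      have h1 : 2*n + i = n + (i + n) := by ring
      rw [birkhoff, h1, Finset.sum_range_add, Finset.sum_range_add, birkhoff]
    have hx : |birkhoff (⇑T) φ n z - birkhoff (⇑T) φ n x| ≤ g n :=
      hg n n le_rfl z x (fun j hj => hZ1 x y j hj)
    have hmid : -((i : ℝ) * K) ≤ ∑ l ∈ Finset.range i, φ ((⇑T)^[n + l] z) := by
      calc -((i : ℝ)*K) = ∑ _l ∈ Finset.range i, (-K) := by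
            rw [Finset.sum_const, Finset.card_range, nsmul_eq_mul]; ring
        _ ≤ _ := Finset.sum_le_sum fun l _ => neg_le_of_abs_le (hK _)
    have hy : |birkhoff (⇑T) φ n ((⇑T)^[n + i] z) - birkhoff (⇑T) φ n y| ≤ g n := by
      refine hg n n le_rfl _ y (fun j hj => ?_)
      have : (⇑T)^[j] ((⇑T)^[n + i] z) = (⇑T)^[n + i + j] z := by
        rw [← Function.iterate_add_apply]
        congr 1
        omega
      rw [this]
      exact hZ2 x y j hj
    have hy2 : ∑ l ∈ Finset.range n, φ ((⇑T)^[n + (i + l)] z)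
        = birkhoff (⇑T) φ n ((⇑T)^[n + i] z) := by
      rw [birkhoff]
      refine Finset.sum_congr rfl fun l _ => ?_
      congr 1
      rw [← Function.iterate_add_apply]
      congr 1
      omega
    rw [hy2] at hdecomp
    have h1 := abs_le.mp hx
    have h2 := abs_le.mp hy
    rw [hdecomp]
    linarith
  -- fiberwise separation
  have hfib : ∀ i : ℕ, ∀ p ∈ (S ×ˢ S).filter (fun p : X × X => I p.1 p.2 = i),
      ∀ p' ∈ (S ×ˢ S).filter (fun p : X × X => I p.1 p.2 = i), p ≠ p' →
      ∃ k < 2*n + i, δ/3 < dist ((⇑T)^[k] (Z p.1 p.2)) ((⇑T)^[k] (Z p'.1 p'.2)) := by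
    rintro i ⟨x, y⟩ hp ⟨x', y'⟩ hp' hne
    obtain ⟨hpS, hpI⟩ := Finset.mem_filter.mp hp
    obtain ⟨hpS', hpI'⟩ := Finset.mem_filter.mp hp'
    obtain ⟨hxS, hyS⟩ := Finset.mem_product.mp hpS
    obtain ⟨hxS', hyS'⟩ := Finset.mem_product.mp hpS'
    simp only at hpI hpI' hxS hyS hxS' hyS'
    by_cases hxx : x = x'
    · have hyy : y ≠ y' := by
        intro h
        exact hne (by rw [hxx, h])
      obtain ⟨k, hk, hd⟩ := hS y hyS y' hyS' hyy
      refine ⟨n + i + k, by omega, ?_⟩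
      have d1 := hZ2 x y k hk
      have d2 := hZ2 x' y' k hk
      rw [hpI] at d1
      rw [hpI'] at d2
      have := dist_triangle4 ((⇑T)^[k] y) ((⇑T)^[n + i + k] (Z x y))
        ((⇑T)^[n + i + k] (Z x' y')) ((⇑T)^[k] y')
      rw [dist_comm ((⇑T)^[k] y) ((⇑T)^[n + i + k] (Z x y))] at this
      linarith
    · obtain ⟨k, hk, hd⟩ := hS x hxS x' hxS' hxx
      refine ⟨k, by omega, ?_⟩
      have d1 := hZ1 x y k hk
      have d2 := hZ1 x' y' k hk
      have := dist_triangle4 ((⇑T)^[k] x) ((⇑T)^[k] (Z x y))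
        ((⇑T)^[k] (Z x' y')) ((⇑T)^[k] x')
      rw [dist_comm ((⇑T)^[k] x) ((⇑T)^[k] (Z x y))] at this
      linarith
  have hmaps : ∀ p ∈ S ×ˢ S, I p.1 p.2 ∈ Finset.range (f n + 1) := by
    rintro ⟨x, y⟩ _
    simp only [Finset.mem_range]
    exact Nat.lt_succ_of_le (hIle x y)
  calc (∑ x ∈ S, Real.exp (birkhoff (⇑T) φ n x))^2
      = ∑ p ∈ S ×ˢ S, Real.exp (birkhoff (⇑T) φ n p.1) * Real.exp (birkhoff (⇑T) φ n p.2) := by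
        rw [sq, Finset.sum_mul_sum]
        rw [Finset.sum_product]
    _ = ∑ i ∈ Finset.range (f n + 1), ∑ p ∈ (S ×ˢ S).filter (fun p : X × X => I p.1 p.2 = i),
          Real.exp (birkhoff (⇑T) φ n p.1) * Real.exp (birkhoff (⇑T) φ n p.2) :=
        (Finset.sum_fiberwise_of_maps_to hmaps _).symm
    _ ≤ ∑ i ∈ Finset.range (f n + 1),
          Real.exp (2 * g n + i * K) * partFn (⇑T) φ (2*n+i) (δ/3) := by
        refine Finset.sum_le_sum fun i _ => ?_
        have hinj : Set.InjOn (fun p : X × X => Z p.1 p.2)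
            ↑((S ×ˢ S).filter (fun p : X × X => I p.1 p.2 = i)) := by
          intro p hp p' hp' hZeq
          by_contra hne
          obtain ⟨k, _, hd⟩ := hfib i p (Finset.mem_coe.mp hp) p' (Finset.mem_coe.mp hp') hne
          simp only at hZeq
          rw [hZeq] at hd
          simp at hd
          linarith
        have hsep : IsSep (⇑T) (2*n+i) (δ/3)
            ↑(((S ×ˢ S).filter (fun p : X × X => I p.1 p.2 = i)).image (fun p : X × X => Z p.1 p.2)) := by
          intro u hu u' hu' huu'
          simp only [Finset.coe_image, Set.mem_image, Finset.mem_coe] at hu hu'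
          obtain ⟨p, hp, rfl⟩ := hu
          obtain ⟨p', hp', rfl⟩ := hu'
          have hne : p ≠ p' := fun h => huu' (by rw [h])
          exact hfib i p hp p' hp' hne
        calc ∑ p ∈ (S ×ˢ S).filter (fun p : X × X => I p.1 p.2 = i),
              Real.exp (birkhoff (⇑T) φ n p.1) * Real.exp (birkhoff (⇑T) φ n p.2)
            ≤ ∑ p ∈ (S ×ˢ S).filter (fun p : X × X => I p.1 p.2 = i),
              Real.exp (2 * g n + i * K) * Real.exp (birkhoff (⇑T) φ (2*n+i) (Z p.1 p.2)) := by
              refine Finset.sum_le_sum fun p hp => ?_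
              have hpI : I p.1 p.2 = i := (Finset.mem_filter.mp hp).2
              have := hpt p.1 p.2
              rw [hpI] at this
              rw [← Real.exp_add, ← Real.exp_add]
              exact Real.exp_le_exp.mpr (by linarith)
          _ = Real.exp (2 * g n + i * K) * ∑ p ∈ (S ×ˢ S).filter (fun p : X × X => I p.1 p.2 = i),
                Real.exp (birkhoff (⇑T) φ (2*n+i) (Z p.1 p.2)) := by
              rw [Finset.mul_sum]
          _ ≤ Real.exp (2 * g n + i * K) * partFn (⇑T) φ (2*n+i) (δ/3) := by
              apply mul_le_mul_of_nonneg_left _ (Real.exp_nonneg _)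
              have heq : ∑ p ∈ (S ×ˢ S).filter (fun p : X × X => I p.1 p.2 = i),
                    Real.exp (birkhoff (⇑T) φ (2*n+i) (Z p.1 p.2))
                  = ∑ u ∈ ((S ×ˢ S).filter (fun p : X × X => I p.1 p.2 = i)).image
                      (fun p : X × X => Z p.1 p.2),
                    Real.exp (birkhoff (⇑T) φ (2*n+i) u) :=
                (Finset.sum_image (f := fun u => Real.exp (birkhoff (⇑T) φ (2*n+i) u))
                  (g := fun p : X × X => Z p.1 p.2)
                  (fun p hp q hq h => hinj hp hq h)).symm
              rw [heq]
              exact le_partFn (⇑T) T.continuous φ K hK (2*n+i) (δ/3) (by linarith) _ hsep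

lemma partFn_third_le (T : X ≃ₜ X) (φ : X → ℝ) (K : ℝ) (hK : ∀ x, |φ x| ≤ K)
    (δ : ℝ) (hδ : 0 < δ) (N : ℕ)
    (hN : ∀ x y : X, δ/3 < dist x y →
      ∃ k ≤ 2*N, δ < dist ((⇑T)^[k] ((⇑T.symm)^[N] x)) ((⇑T)^[k] ((⇑T.symm)^[N] y)))
    (m : ℕ) :
    partFn (⇑T) φ m (δ/3) ≤ Real.exp (2*N*K) * partFn (⇑T) φ (m + 2*N) δ := by
  apply csSup_le
  · exact ⟨0, ⟨∅, fun x hx => absurd hx (by simp), by simp⟩⟩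
  · rintro r ⟨S, hS, rfl⟩
    exact shift_sum_le T φ K hK δ hδ N hN m S hS

lemma key_step (T : X ≃ₜ X) (φ : X → ℝ) (K : ℝ) (hKnn : 0 ≤ K) (hK : ∀ x, |φ x| ≤ K)
    (δ : ℝ) (hδ : 0 < δ) (f : ℕ → ℕ) (htrans : NonUnifTrans (⇑T) f (δ/3))
    (g : ℕ → ℝ) (hgnn : ∀ t, 0 ≤ g t) (hg : HasVarBounds (⇑T) φ g (δ/3))
    (C : ℝ) (hC : 0 < C) (M : ℕ) (hM : 3 ≤ M)
    (hfg : ∀ t : ℕ, M ≤ t → (f t : ℝ) + g t ≤ min (C * Real.log t) (t : ℝ))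
    (N : ℕ)
    (hN : ∀ x y : X, δ/3 < dist x y →
      ∃ k ≤ 2*N, δ < dist ((⇑T)^[k] ((⇑T.symm)^[N] x)) ((⇑T)^[k] ((⇑T.symm)^[N] y)))
    (n : ℕ) (hn : M ≤ n) :
    ∃ j : ℕ, (j : ℝ) ≤ C * Real.log n + 2*N ∧ j ≤ n + 2*N ∧
      (partFn (⇑T) φ n δ)^2
        ≤ Real.exp (C * (3 + K) * Real.log n + 2*N*K) * partFn (⇑T) φ (2*n + j) δ := by
  classical
  have hlogn : 0 ≤ Real.log n := Real.log_nonneg (by exact_mod_cast le_trans (by omega : 1 ≤ M) hn)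
  have hfn : (f n : ℝ) ≤ C * Real.log n := by
    have := hfg n hn
    have h2 := hgnn n
    have := le_min_iff.mp this
    linarith [this.1]
  have hgn : g n ≤ C * Real.log n := by
    have := le_min_iff.mp (hfg n hn)
    have : (f n : ℝ) + g n ≤ C * Real.log n := this.1
    have hfnn : (0:ℝ) ≤ (f n : ℕ) := Nat.cast_nonneg _
    linarith
  have hfn_n : f n ≤ n := by
    have := (le_min_iff.mp (hfg n hn)).2
    have h2 := hgnn n
    have : (f n : ℝ) ≤ (n : ℝ) := by linarith
    exact_mod_cast this
  -- choose maximizing i₀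
  obtain ⟨i₀, hi₀mem, hi₀max⟩ := Finset.exists_max_image (Finset.range (f n + 1))
    (fun i => partFn (⇑T) φ (2*n + (i + 2*N)) δ) ⟨0, Finset.mem_range.mpr (Nat.succ_pos _)⟩
  have hi₀le : i₀ ≤ f n := Nat.lt_succ_iff.mp (Finset.mem_range.mp hi₀mem)
  refine ⟨i₀ + 2*N, ?_, by omega, ?_⟩
  · push_cast
    linarith [hfn, (Nat.cast_le (α := ℝ)).mpr hi₀le]
  -- main bound
  set R : ℝ := ((f n : ℝ) + 1) * Real.exp (2 * g n + (f n) * K + 2*N*K)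
    * partFn (⇑T) φ (2*n + (i₀ + 2*N)) δ with hR
  have hZpos : ∀ m ε, 0 < ε → 0 < partFn (⇑T) φ m ε :=
    fun m ε hε => partFn_pos (⇑T) T.continuous φ K hK m ε hε
  have hRnn : 0 ≤ R := by
    apply mul_nonneg (mul_nonneg (by positivity) (Real.exp_nonneg _))
    exact (hZpos _ δ hδ).le
  have hsq : (partFn (⇑T) φ n δ)^2 ≤ R := by
    have hsqrt : partFn (⇑T) φ n δ ≤ Real.sqrt R := by
      apply csSup_le
      · exact ⟨0, ⟨∅, fun x hx => absurd hx (by simp), by simp⟩⟩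
      rintro r ⟨S, hS, rfl⟩
      rw [show Real.sqrt R = Real.sqrt R from rfl]
      have h1 : (∑ x ∈ S, Real.exp (birkhoff (⇑T) φ n x))^2 ≤ R := by
        calc (∑ x ∈ S, Real.exp (birkhoff (⇑T) φ n x))^2
            ≤ ∑ i ∈ Finset.range (f n + 1),
                Real.exp (2 * g n + i * K) * partFn (⇑T) φ (2*n+i) (δ/3) :=
              glue_sum T φ K hK δ hδ f htrans g hg n S hS
          _ ≤ ∑ i ∈ Finset.range (f n + 1),
                Real.exp (2 * g n + (f n) * K + 2*N*K) * partFn (⇑T) φ (2*n + (i₀ + 2*N)) δ := by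
              refine Finset.sum_le_sum fun i hi => ?_
              have hile : i ≤ f n := Nat.lt_succ_iff.mp (Finset.mem_range.mp hi)
              calc Real.exp (2 * g n + i * K) * partFn (⇑T) φ (2*n+i) (δ/3)
                  ≤ Real.exp (2 * g n + i * K)
                    * (Real.exp (2*N*K) * partFn (⇑T) φ (2*n+i + 2*N) δ) := by
                    apply mul_le_mul_of_nonneg_left _ (Real.exp_nonneg _)
                    exact partFn_third_le T φ K hK δ hδ N hN (2*n+i)
                _ = Real.exp (2 * g n + i * K + 2*N*K) * partFn (⇑T) φ (2*n + (i + 2*N)) δ := by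
                    rw [show 2*n+i + 2*N = 2*n + (i + 2*N) from by ring, ← mul_assoc, ← Real.exp_add]
                _ ≤ Real.exp (2 * g n + (f n) * K + 2*N*K) * partFn (⇑T) φ (2*n + (i₀ + 2*N)) δ := by
                    apply mul_le_mul
                    · apply Real.exp_le_exp.mpr
                      have : (i:ℝ) ≤ (f n : ℝ) := by exact_mod_cast hile
                      nlinarith
                    · exact hi₀max i hi
                    · exact (hZpos _ δ hδ).le
                    · exact Real.exp_nonneg _
          _ = R := by
              rw [Finset.sum_const, Finset.card_range, nsmul_eq_mul, hR]
              push_cast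
              ring
      calc ∑ x ∈ S, Real.exp (birkhoff (⇑T) φ n x)
          = Real.sqrt ((∑ x ∈ S, Real.exp (birkhoff (⇑T) φ n x))^2) :=
            (Real.sqrt_sq (Finset.sum_nonneg fun x _ => Real.exp_nonneg _)).symm
        _ ≤ Real.sqrt R := Real.sqrt_le_sqrt h1
    calc (partFn (⇑T) φ n δ)^2 ≤ (Real.sqrt R)^2 := by
          apply pow_le_pow_left₀ (hZpos _ δ hδ).le hsqrt
      _ = R := Real.sq_sqrt hRnn
  refine hsq.trans ?_
  apply mul_le_mul_of_nonneg_right _ (hZpos _ δ hδ).le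
  have hpos1 : (0:ℝ) < (f n : ℝ) + 1 := by positivity
  have heq : Real.exp (Real.log ((f n : ℝ) + 1) + (2 * g n + (f n : ℝ) * K + 2*(N:ℝ)*K))
      = ((f n : ℝ) + 1) * Real.exp (2 * g n + (f n : ℝ) * K + 2*(N:ℝ)*K) := by
    rw [Real.exp_add, Real.exp_log hpos1]
  rw [← heq]
  apply Real.exp_le_exp.mpr
  have hlog1 : Real.log ((f n : ℝ) + 1) ≤ (f n : ℝ) := by
    have := Real.log_le_sub_one_of_pos hpos1
    linarith
  nlinarith [hfn, hgn, hlogn, hKnn]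

lemma expansive_uniform (T : X ≃ₜ X) (δ : ℝ) (hδ : 0 < δ) (hexp : Expansive T δ) :
    ∃ N : ℕ, ∀ x y : X, δ/3 < dist x y →
      ∃ k ≤ 2*N, δ < dist ((⇑T)^[k] ((⇑T.symm)^[N] x)) ((⇑T)^[k] ((⇑T.symm)^[N] y)) := by
  classical
  set e : Equiv.Perm X := (T.toEquiv : Equiv.Perm X) with he
  have hpos : ∀ m : ℕ, ⇑(e ^ (m : ℤ)) = (⇑T)^[m] := by
    intro m
    rw [zpow_natCast, ← Equiv.Perm.iterate_eq_pow]
    rfl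
  have hneg : ∀ m : ℕ, ⇑(e ^ (-(m : ℤ))) = (⇑T.symm)^[m] := by
    intro m
    rw [zpow_neg, zpow_natCast, ← inv_pow, ← Equiv.Perm.iterate_eq_pow]
    rfl
  have hcont : ∀ n : ℤ, Continuous (⇑(e ^ n)) := by
    intro n
    rcases Int.natAbs_eq n with h | h
    · rw [h, hpos]; exact T.continuous.iterate _
    · rw [h, hneg]; exact T.symm.continuous.iterate _
  set K : Set (X × X) := {p | δ/3 ≤ dist p.1 p.2} with hK
  have hKcomp : IsCompact K := by
    have : IsClosed K := isClosed_le continuous_const continuous_dist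
    exact this.isCompact
  set U : ℤ → Set (X × X) := fun n => {p | δ < dist ((e ^ n) p.1) ((e ^ n) p.2)} with hU
  have hUopen : ∀ n, IsOpen (U n) := by
    intro n
    exact isOpen_lt continuous_const
      (continuous_dist.comp (((hcont n).comp continuous_fst).prodMk ((hcont n).comp continuous_snd)))
  have hcov : K ⊆ ⋃ n : ℤ, U n := by
    rintro ⟨x, y⟩ hxy
    have hne : x ≠ y := by
      intro h
      subst h
      simp only [hK, Set.mem_setOf_eq, dist_self] at hxy
      linarith
    obtain ⟨n, hn⟩ := hexp x y hne
    exact Set.mem_iUnion.mpr ⟨n, hn⟩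
  obtain ⟨s, hs⟩ := hKcomp.elim_finite_subcover U hUopen hcov
  refine ⟨s.sup Int.natAbs, fun x y hxy => ?_⟩
  have hmem : (x, y) ∈ K := Set.mem_setOf_eq ▸ hxy.le
  obtain ⟨n, hns, hn⟩ := Set.mem_iUnion₂.mp (hs hmem)
  set N : ℕ := s.sup Int.natAbs with hN
  have habs : n.natAbs ≤ N := Finset.le_sup hns
  have h1 : -(N : ℤ) ≤ n := by omega
  have h2 : n ≤ (N : ℤ) := by omega
  refine ⟨(n + N).toNat, by omega, ?_⟩
  have hk : ((n + N).toNat : ℤ) = n + N := Int.toNat_of_nonneg (by omega)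
  have hsplit : e ^ n = e ^ (((n + N).toNat : ℤ)) * e ^ (-(N : ℤ)) := by
    rw [← zpow_add, hk]; ring_nf
  have happ : ∀ w : X, (e ^ n) w = (⇑T)^[(n + N).toNat] ((⇑T.symm)^[N] w) := by
    intro w
    rw [hsplit, Equiv.Perm.mul_apply, ← hpos, ← hneg]
  simp only [hU, Set.mem_setOf_eq] at hn
  rw [happ, happ] at hn
  exact hn

end Aux


lemma geo1 (k : ℕ) : ∑ t ∈ Finset.range k, (1:ℝ)/2^(t+1) = 1 - 1/2^k := by
  induction k with
  | zero => simp
  | succ k ih =>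
    rw [Finset.sum_range_succ, ih, pow_succ]
    have h : (2:ℝ)^k ≠ 0 := by positivity
    field_simp
    ring
lemma geo2 (k : ℕ) : ∑ t ∈ Finset.range k, (t:ℝ)/2^(t+1) = 1 - ((k:ℝ)+1)/2^k := by
  induction k with
  | zero => simp
  | succ k ih =>
    rw [Finset.sum_range_succ, ih, pow_succ]
    have h : (2:ℝ)^k ≠ 0 := by positivity
    push_cast
    field_simp
    ring
lemma geo_sum_le (a b : ℝ) (ha : 0 ≤ a) (hb : 0 ≤ b) (k : ℕ) :
    ∑ t ∈ Finset.range k, (a + b * t) / 2^(t+1) ≤ a + 2 * b := by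
  have heq : ∑ t ∈ Finset.range k, (a + b * t) / 2^(t+1)
      = a * ∑ t ∈ Finset.range k, (1:ℝ)/2^(t+1) + b * ∑ t ∈ Finset.range k, (t:ℝ)/2^(t+1) := by
    rw [Finset.mul_sum, Finset.mul_sum, ← Finset.sum_add_distrib]
    refine Finset.sum_congr rfl fun t _ => ?_
    field_simp
  rw [heq, geo1, geo2]
  have h1 : (0:ℝ) < 2^k := by positivity
  have h2 : (0:ℝ) ≤ ((k:ℝ)+1)/2^k := by positivity
  have h3 : (0:ℝ) ≤ 1/2^k := by positivity
  nlinarith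

lemma arith1 (P s n Q : ℝ) (hs1 : n ≤ s) (hs2 : s ≤ n + Q) (hQ : 0 ≤ Q) (hn : 1 ≤ n) :
    (P + 1/n) * s ≤ P*n + 1 + (|P|+1)*Q := by
  have hsn0 : 0 ≤ s - n := by linarith
  have hsnQ : s - n ≤ Q := by linarith
  have e1 : P * (s - n) ≤ |P| * Q :=
    le_trans (mul_le_mul_of_nonneg_right (le_abs_self P) hsn0)
      (mul_le_mul_of_nonneg_left hsnQ (abs_nonneg P))
  have e2 : (1/n) * s ≤ 1 + Q := by
    have ha : (1/n) * s ≤ (1/n) * (n + Q) :=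
      mul_le_mul_of_nonneg_left hs2 (by positivity)
    have hb : (1/n) * (n + Q) = 1 + Q/n := by
      field_simp
    have hc' : Q/n ≤ Q := div_le_self hQ hn
    linarith
  have e3 : (P + 1/n) * s = P*n + P*(s - n) + (1/n)*s := by ring
  have e4 : (|P|+1)*Q = |P| * Q + Q := by ring
  linarith


set_option maxHeartbeats 2000000 in
/-- Upper bound on the partition function under non-uniform transitivity:
if `f n + g n ≤ min (C ln n) n` for all `n ≥ M`, then
`Z(X,T,φ,n,δ) ≤ D · e^{n·P} · n^{C·E}` for all `n ≥ M`, with constants `D, E`. -/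
theorem partFn_upper_bound_trans {X : Type*} [MetricSpace X] [CompactSpace X] [Nonempty X]
    (T : X ≃ₜ X) (δ : ℝ) (hδ : 0 < δ) (hexp : Expansive T δ)
    (f : ℕ → ℕ) (htrans : NonUnifTrans (⇑T) f (δ / 3))
    (φ : X → ℝ) (hφ : Continuous φ) (g : ℕ → ℝ)
    (hg : HasVarBounds (⇑T) φ g (δ / 3))
    (P : ℝ)
    (hP : Tendsto (fun n : ℕ => Real.log (partFn (⇑T) φ n δ) / n) atTop (𝓝 P))
    (C : ℝ) (hC : 0 < C) (M : ℕ) (hM : 3 ≤ M)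
    (hfg : ∀ n : ℕ, M ≤ n → (f n : ℝ) + g n ≤ min (C * Real.log n) (n : ℝ)) :
    ∃ D E : ℝ, 0 < D ∧ 0 < E ∧ ∀ n : ℕ, M ≤ n →
      partFn (⇑T) φ n δ ≤ D * Real.exp ((n : ℝ) * P) * (n : ℝ) ^ (C * E) := by
  classical
  obtain ⟨K0, hK0⟩ := isCompact_univ.exists_bound_of_continuousOn hφ.continuousOn
  set K : ℝ := max K0 0 with hKdef
  have hKnn : 0 ≤ K := le_max_right _ _
  have hK : ∀ x : X, |φ x| ≤ K := fun x =>
    le_trans (by simpa using hK0 x trivial) (le_max_left _ _)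
  obtain ⟨N, hN⟩ := expansive_uniform T δ hδ hexp
  have hgnn : ∀ t, 0 ≤ g t := by
    intro t
    have := hg t 0 (Nat.zero_le _) (Classical.arbitrary X) (Classical.arbitrary X)
      (fun j hj => absurd hj (Nat.not_lt_zero j))
    simpa [birkhoff] using this
  have hZpos : ∀ t : ℕ, 0 < partFn (⇑T) φ t δ :=
    fun t => partFn_pos (⇑T) T.continuous φ K hK t δ hδ
  have hkey : ∀ t : ℕ, M ≤ t → ∃ j : ℕ, (j : ℝ) ≤ C * Real.log t + 2*N ∧ j ≤ t + 2*N ∧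
      (partFn (⇑T) φ t δ)^2
        ≤ Real.exp (C * (3 + K) * Real.log t + 2*N*K) * partFn (⇑T) φ (2*t + j) δ :=
    fun t ht => key_step T φ K hKnn hK δ hδ f htrans g hgnn hg C hC M hM hfg N hN t ht
  choose! j hj1 hj2 hjZ using hkey
  set b : ℕ → ℝ := fun t => Real.log (partFn (⇑T) φ t δ) with hbdef
  set A : ℝ := C * (3 + K) with hAdef
  set B : ℝ := 2*(N:ℝ)*K with hBdef
  have hAnn : 0 ≤ A := by rw [hAdef]; nlinarith
  have hBnn : 0 ≤ B := by rw [hBdef]; positivity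
  have hlog4 : 0 ≤ Real.log 4 := Real.log_nonneg (by norm_num)
  set A₂ : ℝ := (|P|+1)*C + A with hA2
  set B₂ : ℝ := 1 + (|P|+1)*(2*(N:ℝ) + 2*C*Real.log 4) + B + 2*A*Real.log 4 with hB2
  set nBig : ℕ := max M (2*N) with hnBig
  have hbig : ∀ n : ℕ, nBig ≤ n → b n ≤ (n:ℝ)*P + A₂ * Real.log n + B₂ := by
    intro n hn
    have hnM : M ≤ n := le_trans (le_max_left _ _) hn
    have hnN : 2*N ≤ n := le_trans (le_max_right _ _) hn
    have hn1 : 1 ≤ n := by omega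
    have hn1' : (1:ℝ) ≤ (n:ℝ) := by exact_mod_cast hn1
    have hlogn : 0 ≤ Real.log n := Real.log_nonneg hn1'
    set m : ℕ → ℕ := fun k => Nat.rec n (fun _ mk => 2*mk + j mk) k with hmdef
    have hm0 : m 0 = n := rfl
    have hms : ∀ k, m (k+1) = 2 * m k + j (m k) := fun _ => rfl
    have hmge : ∀ k, n ≤ m k := by
      intro k; induction k with
      | zero => simp [hm0]
      | succ k ih => rw [hms]; omega
    have hmM : ∀ k, M ≤ m k := fun k => le_trans hnM (hmge k)
    have hmpos : ∀ k, 0 < m k := fun k => lt_of_lt_of_le (by omega) (hmge k)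
    have hlbk : ∀ k, 2^k * n ≤ m k := by
      intro k; induction k with
      | zero => simp [hm0]
      | succ k ih =>
        calc 2^(k+1)*n = 2*(2^k*n) := by ring
          _ ≤ 2*m k := by omega
          _ ≤ m (k+1) := by rw [hms]; omega
    have hubk : ∀ k, m k ≤ 4^k * n := by
      intro k; induction k with
      | zero => simp [hm0]
      | succ k ih =>
        have hjk := hj2 (m k) (hmM k)
        have h2N : 2*N ≤ m k := le_trans hnN (hmge k)
        calc m (k+1) = 2*m k + j (m k) := hms k
          _ ≤ 2*m k + (m k + 2*N) := by omega
          _ ≤ 4 * m k := by omega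
          _ ≤ 4 * (4^k * n) := by exact Nat.mul_le_mul_left 4 ih
          _ = 4^(k+1) * n := by ring
    have hlogm : ∀ k, Real.log (m k) ≤ Real.log n + k * Real.log 4 := by
      intro k
      have h1 : ((m k : ℕ):ℝ) ≤ ((4:ℝ))^k * (n:ℝ) := by
        have := hubk k
        have h2 : ((m k : ℕ):ℝ) ≤ ((4^k * n : ℕ):ℝ) := by exact_mod_cast this
        calc ((m k : ℕ):ℝ) ≤ ((4^k * n : ℕ):ℝ) := h2
          _ = ((4:ℝ))^k * (n:ℝ) := by push_cast; ring
      have h2 : (0:ℝ) < ((m k : ℕ):ℝ) := by exact_mod_cast hmpos k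
      calc Real.log (m k) ≤ Real.log ((4:ℝ)^k * (n:ℝ)) := Real.log_le_log h2 h1
        _ = (k:ℝ) * Real.log 4 + Real.log n := by
            rw [Real.log_mul (by positivity) (by positivity), Real.log_pow]
        _ = Real.log n + k * Real.log 4 := by ring
    have hloglem : ∀ k, 2 * b (m k) ≤ (A * Real.log (m k) + B) + b (m (k+1)) := by
      intro k
      have h := hjZ (m k) (hmM k)
      have hsqpos : (0:ℝ) < (partFn (⇑T) φ (m k) δ)^2 := by
        have := hZpos (m k); positivity
      have hlog := Real.log_le_log hsqpos h
      rw [Real.log_pow, Real.log_mul (Real.exp_ne_zero _) (ne_of_gt (hZpos _)),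
        Real.log_exp] at hlog
      rw [← hms k] at hlog
      have hb1 : b (m k) = Real.log (partFn (⇑T) φ (m k) δ) := rfl
      have hb2 : b (m (k+1)) = Real.log (partFn (⇑T) φ (m (k+1)) δ) := rfl
      rw [hb1, hb2]
      push_cast at hlog
      linarith
    have hiter : ∀ k, b n ≤ b (m k)/2^k
        + ∑ t ∈ Finset.range k, (A * Real.log (m t) + B)/2^(t+1) := by
      intro k; induction k with
      | zero => simp [hm0]
      | succ k ih =>
        have hstep : b (m k)/2^k ≤ b (m (k+1))/2^(k+1) + (A * Real.log (m k) + B)/2^(k+1) := by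
          have h2 : (0:ℝ) < 2^(k+1) := by positivity
          calc b (m k)/2^k = (2 * b (m k))/2^(k+1) := by
                rw [pow_succ]; field_simp
            _ ≤ ((A * Real.log (m k) + B) + b (m (k+1)))/2^(k+1) :=
                (div_le_div_iff_of_pos_right h2).mpr (hloglem k)
            _ = b (m (k+1))/2^(k+1) + (A * Real.log (m k) + B)/2^(k+1) := by
                rw [add_div]; ring
        calc b n ≤ b (m k)/2^k + ∑ t ∈ Finset.range k, (A * Real.log (m t) + B)/2^(t+1) := ih
          _ ≤ (b (m (k+1))/2^(k+1) + (A * Real.log (m k) + B)/2^(k+1))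
              + ∑ t ∈ Finset.range k, (A * Real.log (m t) + B)/2^(t+1) := by linarith
          _ = b (m (k+1))/2^(k+1)
              + ∑ t ∈ Finset.range (k+1), (A * Real.log (m t) + B)/2^(t+1) := by
              rw [Finset.sum_range_succ]; ring
    have hΓ : ∀ k, ∑ t ∈ Finset.range k, (A * Real.log (m t) + B)/2^(t+1)
        ≤ (A*Real.log n + B) + 2*(A*Real.log 4) := by
      intro k
      calc ∑ t ∈ Finset.range k, (A * Real.log (m t) + B)/2^(t+1)
          ≤ ∑ t ∈ Finset.range k, ((A*Real.log n + B) + (A*Real.log 4) * t)/2^(t+1) := by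
            refine Finset.sum_le_sum fun t _ => ?_
            have h2 : (0:ℝ) < 2^(t+1) := by positivity
            apply (div_le_div_iff_of_pos_right h2).mpr
            have := mul_le_mul_of_nonneg_left (hlogm t) hAnn
            nlinarith
        _ ≤ (A*Real.log n + B) + 2*(A*Real.log 4) :=
            geo_sum_le _ _ (add_nonneg (mul_nonneg hAnn hlogn) hBnn)
              (mul_nonneg hAnn hlog4) k
    set Q : ℝ := (C*Real.log n + 2*(N:ℝ)) + 2*(C*Real.log 4) with hQ
    have hQnn : 0 ≤ Q := by
      rw [hQ]
      nlinarith [mul_nonneg hC.le hlogn, mul_nonneg hC.le hlog4]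
    have hdiv : ∀ k, (m k:ℝ)/2^k ≤ (n:ℝ) + Q := by
      intro k
      have h1 : (m k:ℝ)/2^k ≤ (n:ℝ)
          + ∑ t ∈ Finset.range k, (C*Real.log (m t) + 2*(N:ℝ))/2^(t+1) := by
        induction k with
        | zero => simp [hm0]
        | succ k ih =>
          have hjt : (j (m k):ℝ) ≤ C * Real.log (m k) + 2*(N:ℝ) := hj1 (m k) (hmM k)
          have h2 : (0:ℝ) < 2^(k+1) := by positivity
          have heq : ((m (k+1) : ℕ):ℝ)/2^(k+1) = (m k:ℝ)/2^k + (j (m k):ℝ)/2^(k+1) := by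
            rw [hms k]
            push_cast
            rw [pow_succ]
            field_simp
          rw [heq, Finset.sum_range_succ]
          have h3 : (j (m k):ℝ)/2^(k+1) ≤ (C*Real.log (m k) + 2*(N:ℝ))/2^(k+1) :=
            (div_le_div_iff_of_pos_right h2).mpr hjt
          linarith
      refine h1.trans ?_
      have h4 : ∑ t ∈ Finset.range k, (C*Real.log (m t) + 2*(N:ℝ))/2^(t+1)
          ≤ (C*Real.log n + 2*(N:ℝ)) + 2*(C*Real.log 4) := by
        calc ∑ t ∈ Finset.range k, (C*Real.log (m t) + 2*(N:ℝ))/2^(t+1)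
            ≤ ∑ t ∈ Finset.range k, ((C*Real.log n + 2*(N:ℝ)) + (C*Real.log 4) * t)/2^(t+1) := by
              refine Finset.sum_le_sum fun t _ => ?_
              have h2 : (0:ℝ) < 2^(t+1) := by positivity
              apply (div_le_div_iff_of_pos_right h2).mpr
              have := mul_le_mul_of_nonneg_left (hlogm t) hC.le
              nlinarith
          _ ≤ (C*Real.log n + 2*(N:ℝ)) + 2*(C*Real.log 4) :=
              geo_sum_le _ _ (by nlinarith [mul_nonneg hC.le hlogn])
                (mul_nonneg hC.le hlog4) k
      rw [hQ]
      linarith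
    have hklb : ∀ k, (n:ℝ) ≤ (m k:ℝ)/2^k := by
      intro k
      have h2 : (0:ℝ) < (2:ℝ)^k := by positivity
      rw [le_div_iff₀ h2]
      have h3 := hlbk k
      calc (n:ℝ) * 2^k = ((2^k * n : ℕ):ℝ) := by push_cast; ring
        _ ≤ ((m k : ℕ):ℝ) := by exact_mod_cast h3
    have hn0 : (0:ℝ) < (n:ℝ) := by linarith
    have h1n : (0:ℝ) < 1/(n:ℝ) := by positivity
    have hev : ∀ᶠ t in atTop, Real.log (partFn (⇑T) φ t δ) / (t:ℝ) ≤ P + 1/(n:ℝ) :=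
      hP.eventually (eventually_le_nhds (by linarith))
    obtain ⟨K₀, hK₀⟩ := Filter.eventually_atTop.mp hev
    have hmk : K₀ ≤ m K₀ := by
      have h1 := hlbk K₀
      have h2 : K₀ < 2^K₀ := Nat.lt_two_pow_self
      have h3 : 2^K₀ ≤ 2^K₀ * n := Nat.le_mul_of_pos_right _ (by omega)
      omega
    have hmpos' : (0:ℝ) < ((m K₀ : ℕ):ℝ) := by exact_mod_cast hmpos K₀
    have hbmk : b (m K₀) ≤ (P + 1/(n:ℝ)) * ((m K₀:ℕ):ℝ) := by
      have hbt := hK₀ (m K₀) hmk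
      rw [div_le_iff₀ hmpos'] at hbt
      exact hbt
    have h2K : (0:ℝ) < (2:ℝ)^K₀ := by positivity
    have hbk2 : b (m K₀)/2^K₀ ≤ (P + 1/(n:ℝ)) * ((m K₀:ℝ)/2^K₀) := by
      rw [← mul_div_assoc]
      exact (div_le_div_iff_of_pos_right h2K).mpr hbmk
    set s : ℝ := ((m K₀:ℕ):ℝ)/2^K₀ with hs
    have hs1 : (n:ℝ) ≤ s := hklb K₀
    have hs2 : s ≤ (n:ℝ) + Q := hdiv K₀
    have hfin : (P + 1/(n:ℝ)) * s ≤ P*(n:ℝ) + 1 + (|P|+1)*Q :=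
      arith1 P s (n:ℝ) Q hs1 hs2 hQnn hn1'
    have hBn := hiter K₀
    have hΓK := hΓ K₀
    have hfinal : b n ≤ P*(n:ℝ) + 1 + (|P|+1)*Q + ((A*Real.log n + B) + 2*(A*Real.log 4)) :=
      le_trans hBn (add_le_add (hbk2.trans hfin) hΓK)
    have hexpand : P*(n:ℝ) + 1 + (|P|+1)*Q + ((A*Real.log n + B) + 2*(A*Real.log 4))
        = (n:ℝ)*P + A₂ * Real.log n + B₂ := by
      rw [hQ, hA2, hB2]; ring
    rw [← hexpand]
    exact hfinal
  -- package constants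
  have hA2nn : 0 ≤ A₂ := by
    rw [hA2]
    nlinarith [abs_nonneg P, hC.le, hAnn]
  set E : ℝ := (A₂ + 1)/C with hE
  have hEpos : 0 < E := by rw [hE]; positivity
  have hCE : C * E = A₂ + 1 := by rw [hE]; field_simp
  set D₀ : ℝ := ∑ t ∈ Finset.Ico M nBig, partFn (⇑T) φ t δ * Real.exp (-((t:ℝ)*P)) with hD₀
  have hD₀nn : 0 ≤ D₀ := Finset.sum_nonneg fun t _ =>
    mul_nonneg (hZpos t).le (Real.exp_nonneg _)
  refine ⟨Real.exp B₂ + D₀, E, by positivity, hEpos, ?_⟩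
  intro n hn
  have hn1' : (1:ℝ) ≤ (n:ℝ) := by
    have : (3:ℕ) ≤ n := le_trans hM hn
    exact_mod_cast le_trans (by norm_num) this
  have hrpow1 : (1:ℝ) ≤ (n:ℝ) ^ (C*E) := by
    calc (1:ℝ) = (n:ℝ) ^ (0:ℝ) := (Real.rpow_zero _).symm
      _ ≤ (n:ℝ) ^ (C*E) := Real.rpow_le_rpow_of_exponent_le hn1' (by nlinarith [hCE, hA2nn])
  rcases le_or_gt nBig n with hcase | hcase
  · have hb := hbig n hcase
    have hZn : partFn (⇑T) φ n δ = Real.exp (b n) := (Real.exp_log (hZpos n)).symm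
    have hrpow : Real.exp (A₂ * Real.log n) = (n:ℝ) ^ A₂ := by
      rw [Real.rpow_def_of_pos (by linarith), mul_comm]
    calc partFn (⇑T) φ n δ = Real.exp (b n) := hZn
      _ ≤ Real.exp ((n:ℝ)*P + A₂ * Real.log n + B₂) := Real.exp_le_exp.mpr hb
      _ = Real.exp B₂ * Real.exp ((n:ℝ)*P) * Real.exp (A₂ * Real.log n) := by
          rw [← Real.exp_add, ← Real.exp_add]; ring_nf
      _ = Real.exp B₂ * Real.exp ((n:ℝ)*P) * (n:ℝ) ^ A₂ := by rw [hrpow]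
      _ ≤ (Real.exp B₂ + D₀) * Real.exp ((n:ℝ)*P) * (n:ℝ) ^ (C*E) := by
          have h1 : (n:ℝ) ^ A₂ ≤ (n:ℝ) ^ (C*E) :=
            Real.rpow_le_rpow_of_exponent_le hn1' (by nlinarith [hCE])
          have h2 : Real.exp B₂ ≤ Real.exp B₂ + D₀ := by linarith
          have hp1 : (0:ℝ) ≤ Real.exp ((n:ℝ)*P) := Real.exp_nonneg _
          have hp4 : (0:ℝ) ≤ (n:ℝ) ^ (C*E) := Real.rpow_nonneg (by linarith) _
          have s1 : Real.exp B₂ * Real.exp ((n:ℝ)*P) * (n:ℝ) ^ A₂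
              ≤ Real.exp B₂ * Real.exp ((n:ℝ)*P) * (n:ℝ) ^ (C*E) :=
            mul_le_mul_of_nonneg_left h1 (mul_nonneg (Real.exp_nonneg _) hp1)
          have s2 : Real.exp B₂ * Real.exp ((n:ℝ)*P) * (n:ℝ) ^ (C*E)
              ≤ (Real.exp B₂ + D₀) * Real.exp ((n:ℝ)*P) * (n:ℝ) ^ (C*E) :=
            mul_le_mul_of_nonneg_right
              (mul_le_mul_of_nonneg_right h2 hp1) hp4
          linarith only [s1, s2]
  · have hmem : n ∈ Finset.Ico M nBig := Finset.mem_Ico.mpr ⟨hn, hcase⟩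
    have hterm : partFn (⇑T) φ n δ * Real.exp (-((n:ℝ)*P)) ≤ D₀ :=
      Finset.single_le_sum (f := fun t : ℕ => partFn (⇑T) φ t δ * Real.exp (-((t:ℝ)*P)))
        (fun t _ => mul_nonneg (hZpos t).le (Real.exp_nonneg _)) hmem
    have hZeq : partFn (⇑T) φ n δ
        = (partFn (⇑T) φ n δ * Real.exp (-((n:ℝ)*P))) * Real.exp ((n:ℝ)*P) := by
      rw [mul_assoc, ← Real.exp_add]
      simp
    calc partFn (⇑T) φ n δ
        = (partFn (⇑T) φ n δ * Real.exp (-((n:ℝ)*P))) * Real.exp ((n:ℝ)*P) := hZeq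
      _ ≤ D₀ * Real.exp ((n:ℝ)*P) :=
          mul_le_mul_of_nonneg_right hterm (Real.exp_nonneg _)
      _ ≤ (Real.exp B₂ + D₀) * Real.exp ((n:ℝ)*P) * (n:ℝ) ^ (C*E) := by
          have hp1 : (0:ℝ) < Real.exp ((n:ℝ)*P) := Real.exp_pos _
          have hp2 : D₀ ≤ Real.exp B₂ + D₀ := by linarith [Real.exp_pos B₂]
          have s1 : D₀ * Real.exp ((n:ℝ)*P) ≤ (Real.exp B₂ + D₀) * Real.exp ((n:ℝ)*P) :=
            mul_le_mul_of_nonneg_right hp2 hp1.le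
          have s0 : (0:ℝ) ≤ (Real.exp B₂ + D₀) * Real.exp ((n:ℝ)*P) :=
            mul_nonneg (by linarith [Real.exp_pos B₂]) hp1.le
          have s2 : (Real.exp B₂ + D₀) * Real.exp ((n:ℝ)*P)
              ≤ (Real.exp B₂ + D₀) * Real.exp ((n:ℝ)*P) * (n:ℝ) ^ (C*E) :=
            le_mul_of_one_le_right s0 hrpow1
          linarith only [s1, s2]
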